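/- Let A be a subfield of a field B and let D = A + X·B[X]. Then the irreducible elements of D are exactly the elements aX with a ∈ B, a ≠ 0, together with the elements a(1 + Xf(X)) with a ∈ A, a ≠ 0, f ∈ B[X], such that 1 + Xf(X) is irreducible in B[X]. -/

import Mathlib

/-- The polynomial composite `A + X·B[X]`: the subring of `B[X]` of polynomials
whose constant coefficient lies in `A`. -/
def Subring.composite {B : Type*} [CommRing B] (A : Subring B) : Subring (Polynomial B) where
  carrier := {f : Polynomial B | f.coeff 0 ∈ A}
  mul_mem' {f g} hf hg := by
    simp only [Set.mem_setOf_eq, Polynomial.mul_coeff_zero] at *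
    exact mul_mem hf hg
  one_mem' := by
    simp only [Set.mem_setOf_eq, Polynomial.coeff_one_zero]
    exact one_mem A
  add_mem' {f g} hf hg := by
    simp only [Set.mem_setOf_eq, Polynomial.coeff_add] at *
    exact add_mem hf hg
  zero_mem' := by
    simp only [Set.mem_setOf_eq, Polynomial.coeff_zero]
    exact zero_mem A
  neg_mem' {f} hf := by
    simp only [Set.mem_setOf_eq, Polynomial.coeff_neg] at *
    exact neg_mem hf

theorem Subring.mem_composite {B : Type*} [CommRing B] (A : Subring B) (f : Polynomial B) :
    f ∈ A.composite ↔ f.coeff 0 ∈ A := Iff.rfl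


open Polynomial in
lemma isUnit_composite_iff {B : Type*} [Field B] (A : Subfield B)
    (u : A.toSubring.composite) :
    IsUnit u ↔ ∃ a : B, a ≠ 0 ∧ (u : Polynomial B) = C a := by
  constructor
  · intro h
    have h2 : IsUnit (u : Polynomial B) := h.map (A.toSubring.composite.subtype)
    rw [Polynomial.isUnit_iff] at h2
    obtain ⟨r, hr, heq⟩ := h2
    exact ⟨r, hr.ne_zero, heq.symm⟩
  · rintro ⟨a, ha, heq⟩
    have haA : a ∈ A := by
      have := u.2
      rw [Subring.mem_composite] at this
      rw [heq] at this
      simpa using this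
    have hmem : (C a⁻¹ : Polynomial B) ∈ A.toSubring.composite := by
      rw [Subring.mem_composite]
      simpa using A.inv_mem haA
    refine IsUnit.of_mul_eq_one (a := u) ⟨C a⁻¹, hmem⟩ ?_
    ext
    push_cast
    rw [heq, ← C_mul, mul_inv_cancel₀ ha, C_1]

open Polynomial in
lemma isUnit_composite_of_coe {B : Type*} [Field B] (A : Subfield B)
    (u : A.toSubring.composite) (h : IsUnit (u : Polynomial B)) : IsUnit u := by
  rw [Polynomial.isUnit_iff] at h
  obtain ⟨r, hr, heq⟩ := h
  exact (isUnit_composite_iff A u).2 ⟨r, hr.ne_zero, heq.symm⟩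

open Polynomial in
/-- The irreducible elements of `D = A + X·B[X]` (for `A ⊆ B` fields) are exactly the `aX`
with `a ∈ B \ {0}`, together with the `a·(1 + X·f(X))` with `a ∈ A \ {0}`, `f ∈ B[X]`,
and `1 + X·f(X)` irreducible in `B[X]`. -/
theorem irreducible_composite_iff {B : Type*} [Field B] (A : Subfield B)
    (g : A.toSubring.composite) :
    Irreducible g ↔
      (∃ a : B, a ≠ 0 ∧ (g : Polynomial B) = C a * X) ∨
      (∃ a : B, a ∈ A ∧ a ≠ 0 ∧ ∃ f : Polynomial B,
        (g : Polynomial B) = C a * (1 + X * f) ∧ Irreducible (1 + X * f)) := by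
  constructor
  · intro hg
    by_cases hc : (g : Polynomial B).coeff 0 = 0
    · -- g = X * divX g
      left
      set k : Polynomial B := (g : Polynomial B).divX with hk
      have hgk : (g : Polynomial B) = X * k := by
        conv_lhs => rw [← X_mul_divX_add (g : Polynomial B)]
        rw [hc, C_0, add_zero]
      by_cases hk0 : k.coeff 0 = 0
      · -- g = X * k with k divisible by X : contradiction
        exfalso
        have hXmem : (X : Polynomial B) ∈ A.toSubring.composite := by
          rw [Subring.mem_composite]; simp only [coeff_X_zero]; exact zero_mem _
        have hkmem : k ∈ A.toSubring.composite := by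
          rw [Subring.mem_composite, hk0]; exact zero_mem _
        have heq : g = (⟨X, hXmem⟩ : A.toSubring.composite) * ⟨k, hkmem⟩ := by
          apply Subtype.ext; push_cast; exact hgk
        rcases hg.isUnit_or_isUnit heq with h | h
        · obtain ⟨a, ha, h⟩ := (isUnit_composite_iff A _).1 h
          have := congrArg (fun p => Polynomial.coeff p 1) h
          simp at this
        · obtain ⟨a, ha, h⟩ := (isUnit_composite_iff A _).1 h
          have := congrArg (fun p => Polynomial.coeff p 0) h
          simp [hk0] at this
          exact ha this.symm
      · -- g = (C k₀ * X) * (C k₀⁻¹ * k)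
        set b : B := k.coeff 0 with hb
        have h1mem : (C b * X : Polynomial B) ∈ A.toSubring.composite := by
          rw [Subring.mem_composite]; simp only [mul_coeff_zero, coeff_X_zero, mul_zero]
          exact zero_mem _
        have h2mem : (C b⁻¹ * k : Polynomial B) ∈ A.toSubring.composite := by
          rw [Subring.mem_composite]
          simp only [mul_coeff_zero, coeff_C_zero, ← hb, inv_mul_cancel₀ hk0]
          exact one_mem _
        have heq : g = (⟨C b * X, h1mem⟩ : A.toSubring.composite) * ⟨C b⁻¹ * k, h2mem⟩ := by
          apply Subtype.ext; push_cast
          rw [hgk, show C b * X * (C b⁻¹ * k) = (C b * C b⁻¹) * (X * k) from by ring,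
            ← C_mul, mul_inv_cancel₀ hk0, C_1, one_mul]
        rcases hg.isUnit_or_isUnit heq with h | h
        · exfalso
          obtain ⟨a, ha, h⟩ := (isUnit_composite_iff A _).1 h
          have := congrArg (fun p => Polynomial.coeff p 1) h
          simp at this
          exact hk0 this
        · obtain ⟨a, ha, h⟩ := (isUnit_composite_iff A _).1 h
          simp only at h
          have hkC : k = C (b * a) := by
            have : C b * (C b⁻¹ * k) = C b * C a := by rw [h]
            rwa [← mul_assoc, ← C_mul, mul_inv_cancel₀ hk0, C_1, one_mul, ← C_mul] at this
          exact ⟨b * a, mul_ne_zero hk0 ha, by rw [hgk, hkC, mul_comm]⟩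
    · -- constant coefficient c ≠ 0
      right
      set c : B := (g : Polynomial B).coeff 0 with hcdef
      have hcA : c ∈ A := g.2
      set f : Polynomial B := C c⁻¹ * (g : Polynomial B).divX with hf
      have hgf : (g : Polynomial B) = C c * (1 + X * f) := by
        conv_lhs => rw [← X_mul_divX_add (g : Polynomial B)]
        rw [hf, mul_add, mul_one,
          show C c * (X * (C c⁻¹ * (g : Polynomial B).divX))
            = (C c * C c⁻¹) * (X * (g : Polynomial B).divX) from by ring,
          ← C_mul, mul_inv_cancel₀ hc, C_1, one_mul, add_comm]
      refine ⟨c, hcA, hc, f, hgf, ?_, ?_⟩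
      · -- not a unit
        intro hu
        rw [Polynomial.isUnit_iff] at hu
        obtain ⟨r, hr, hru⟩ := hu
        have hr1 : r = 1 := by
          have := congrArg (fun p => Polynomial.coeff p 0) hru
          simpa using this
        rw [hr1, C_1] at hru
        have hXf : X * f = 0 := left_eq_add.mp hru
        have hgC : (g : Polynomial B) = C c := by rw [hgf, hXf, add_zero, mul_one]
        exact hg.not_isUnit ((isUnit_composite_iff A g).2 ⟨c, hc, hgC⟩)
      · -- factorization in B[X]
        rintro u v huv
        have hu0 : u.coeff 0 * v.coeff 0 = 1 := by
          have := congrArg (fun p => Polynomial.coeff p 0) huv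
          simpa [mul_coeff_zero] using this.symm
        have hu0ne : u.coeff 0 ≠ 0 := left_ne_zero_of_mul_eq_one hu0
        have hv0ne : v.coeff 0 ≠ 0 := right_ne_zero_of_mul_eq_one hu0
        set u₀ : B := u.coeff 0 with hu₀
        have hUmem : (C (c * u₀⁻¹) * u : Polynomial B) ∈ A.toSubring.composite := by
          rw [Subring.mem_composite]
          simp only [mul_coeff_zero, coeff_C_zero]
          rw [mul_assoc, inv_mul_cancel₀ hu0ne, mul_one]
          exact hcA
        have hVmem : (C u₀ * v : Polynomial B) ∈ A.toSubring.composite := by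
          rw [Subring.mem_composite]
          simp only [mul_coeff_zero, coeff_C_zero]
          rw [hu0]
          exact one_mem _
        have heq : g = (⟨C (c * u₀⁻¹) * u, hUmem⟩ : A.toSubring.composite) * ⟨C u₀ * v, hVmem⟩ := by
          apply Subtype.ext; push_cast
          rw [hgf, huv,
            show C (c * u₀⁻¹) * u * (C u₀ * v) = C c * (C u₀⁻¹ * C u₀) * (u * v) from by
              rw [C_mul]; ring,
            ← C_mul, inv_mul_cancel₀ hu0ne, C_1, mul_one]
        rcases hg.isUnit_or_isUnit heq with h | h
        · left
          obtain ⟨a, ha, h⟩ := (isUnit_composite_iff A _).1 h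
          simp only at h
          have : u = C ((c * u₀⁻¹)⁻¹ * a) := by
            have h2 : C (c * u₀⁻¹)⁻¹ * (C (c * u₀⁻¹) * u) = C (c * u₀⁻¹)⁻¹ * C a := by rw [h]
            rwa [← mul_assoc, ← C_mul, inv_mul_cancel₀ (mul_ne_zero hc (inv_ne_zero hu0ne)),
              C_1, one_mul, ← C_mul] at h2
          rw [this]
          exact isUnit_C.2 (mul_ne_zero (inv_ne_zero (mul_ne_zero hc (inv_ne_zero hu0ne))) ha).isUnit
        · right
          obtain ⟨a, ha, h⟩ := (isUnit_composite_iff A _).1 h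
          simp only at h
          have : v = C (u₀⁻¹ * a) := by
            have h2 : C u₀⁻¹ * (C u₀ * v) = C u₀⁻¹ * C a := by rw [h]
            rwa [← mul_assoc, ← C_mul, inv_mul_cancel₀ hu0ne, C_1, one_mul, ← C_mul] at h2
          rw [this]
          exact isUnit_C.2 (mul_ne_zero (inv_ne_zero hu0ne) ha).isUnit
  · rintro (⟨a, ha, heq⟩ | ⟨a, haA, ha, f, heq, hirr⟩)
    · constructor
      · intro hu
        obtain ⟨b, hb, h⟩ := (isUnit_composite_iff A g).1 hu
        rw [heq] at h
        have := congrArg (fun p => Polynomial.coeff p 1) h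
        simp [ha] at this
      · rintro u v huv
        have huv' : (C a * X : Polynomial B) = (u : Polynomial B) * (v : Polynomial B) := by
          rw [← heq, huv]; push_cast; ring
        have hX : (X : Polynomial B) = (C a⁻¹ * (u : Polynomial B)) * (v : Polynomial B) := by
          have h2 : C a⁻¹ * (C a * X) = X := by
            rw [← mul_assoc, ← C_mul, inv_mul_cancel₀ ha, C_1, one_mul]
          rw [← h2, huv', ← mul_assoc]
        rcases (Polynomial.irreducible_X (R := B)).isUnit_or_isUnit hX with h | h
        · left
          refine isUnit_composite_of_coe A u ?_
          have hCa : IsUnit (C a : Polynomial B) := isUnit_C.2 ha.isUnit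
          have : (u : Polynomial B) = C a * (C a⁻¹ * u) := by
            rw [← mul_assoc, ← C_mul, mul_inv_cancel₀ ha, C_1, one_mul]
          rw [this]
          exact hCa.mul h
        · exact Or.inr (isUnit_composite_of_coe A v h)
    · constructor
      · intro hu
        obtain ⟨b, hb, h⟩ := (isUnit_composite_iff A g).1 hu
        rw [heq] at h
        have h2 : (1 + X * f : Polynomial B) = C (a⁻¹ * b) := by
          have h3 : C a⁻¹ * (C a * (1 + X * f)) = C a⁻¹ * C b := by rw [h]
          rwa [← mul_assoc, ← C_mul, inv_mul_cancel₀ ha, C_1, one_mul, ← C_mul] at h3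
        exact hirr.not_isUnit (h2 ▸ isUnit_C.2 (mul_ne_zero (inv_ne_zero ha) hb).isUnit)
      · rintro u v huv
        have huv' : (C a * (1 + X * f) : Polynomial B)
            = (u : Polynomial B) * (v : Polynomial B) := by
          rw [← heq, huv]; push_cast; ring
        have h1 : (1 + X * f : Polynomial B)
            = (C a⁻¹ * (u : Polynomial B)) * (v : Polynomial B) := by
          have h2 : C a⁻¹ * (C a * (1 + X * f)) = 1 + X * f := by
            rw [← mul_assoc, ← C_mul, inv_mul_cancel₀ ha, C_1, one_mul]
          rw [← h2, huv', ← mul_assoc]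
        rcases hirr.isUnit_or_isUnit h1 with h | h
        · left
          refine isUnit_composite_of_coe A u ?_
          have hCa : IsUnit (C a : Polynomial B) := isUnit_C.2 ha.isUnit
          have : (u : Polynomial B) = C a * (C a⁻¹ * u) := by
            rw [← mul_assoc, ← C_mul, mul_inv_cancel₀ ha, C_1, one_mul]
          rw [this]
          exact hCa.mul h
        · exact Or.inr (isUnit_composite_of_coe A v h)
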